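/- Let m be a positive natural number, let k : Fin m → ℤ, and let ε : Fin m → ℤ satisfy ε i ∈ {1, −1} for all i and Σ_i ε i = 1. In the free group F on two generators x and a, let w = ∏_{i=0}^{m−1} x^{−k i}·a^{ε i}·x^{k i} (product taken in order of increasing i). Then for every natural number n, the normal closure of the set {w, x·a^n} in F is all of F; equivalently, in the presented group ⟨x, a | w⟩ the element x·a^n normally generates the group. -/

import Mathlib

lemma prod_zpow_list {G : Type*} [Group G] (b : G) (l : List ℤ) :
    (l.map fun n => b ^ n).prod = b ^ l.sum := by
  induction l with
  | nil => simp
  | cons h t ih => simp [ih, zpow_add]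

theorem two_bridge_killers (m : ℕ) (hm : 0 < m) (k ε : Fin m → ℤ)
    (hε : ∀ i, ε i = 1 ∨ ε i = -1) (hsum : ∑ i, ε i = 1)
    (x a : FreeGroup (Fin 2)) (hx : x = FreeGroup.of 0) (ha : a = FreeGroup.of 1)
    (w : FreeGroup (Fin 2))
    (hw : w = (List.ofFn fun i : Fin m => x ^ (-(k i)) * a ^ (ε i) * x ^ (k i)).prod) :
    ∀ n : ℕ, Subgroup.normalClosure ({w, x * a ^ n} : Set (FreeGroup (Fin 2))) = ⊤ := by
  intro n
  set N := Subgroup.normalClosure ({w, x * a ^ n} : Set (FreeGroup (Fin 2))) with hN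
  haveI : N.Normal := Subgroup.normalClosure_normal
  set φ := QuotientGroup.mk' N with hφ
  have hker : ∀ g : FreeGroup (Fin 2), g ∈ N → φ g = 1 := by
    intro g hg
    rw [← QuotientGroup.ker_mk' N] at hg
    exact hg
  have hwN : w ∈ N := Subgroup.subset_normalClosure (by simp)
  have hxN : x * a ^ n ∈ N := Subgroup.subset_normalClosure (by simp)
  have hφxa : φ x * φ a ^ n = 1 := by
    rw [← map_pow, ← map_mul]; exact hker _ hxN
  have hb : φ x = (φ a) ^ (-(n : ℤ)) := by
    rw [zpow_neg, zpow_natCast, eq_inv_iff_mul_eq_one]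
    exact hφxa
  have hterm : ∀ i, φ (x ^ (-(k i)) * a ^ (ε i) * x ^ (k i)) = φ a ^ (ε i) := by
    intro i
    rw [map_mul, map_mul, map_zpow, map_zpow, map_zpow, hb, ← zpow_mul, ← zpow_mul,
      ← zpow_add, ← zpow_add]
    congr 1
    ring
  have hφw : φ w = 1 := hker _ hwN
  have ha1 : φ a = 1 := by
    have h1 : φ w = φ a := by
      rw [hw, map_list_prod, List.map_ofFn]
      have h2 : (φ ∘ fun i : Fin m => x ^ (-(k i)) * a ^ (ε i) * x ^ (k i)) =
          fun i => φ a ^ ε i := by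
        funext i; exact hterm i
      rw [h2, show (List.ofFn fun i : Fin m => φ a ^ ε i)
          = (List.ofFn ε).map (fun z => φ a ^ z) from by rw [List.map_ofFn]; rfl,
        prod_zpow_list, List.sum_ofFn, hsum, zpow_one]
    rw [← h1, hφw]
  have haN : a ∈ N := by
    rw [← QuotientGroup.ker_mk' N]
    exact ha1
  have hxN' : x ∈ N := by
    have h : x = (x * a ^ n) * (a ^ n)⁻¹ := by group
    rw [h]
    exact N.mul_mem hxN (N.inv_mem (N.pow_mem haN n))
  have key : ∀ g : FreeGroup (Fin 2), g ∈ N := by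
    intro g
    induction g using FreeGroup.induction_on with
    | C1 => exact N.one_mem
    | of i =>
        match i with
        | 0 => show FreeGroup.of 0 ∈ N; exact hx ▸ hxN'
        | 1 => show FreeGroup.of 1 ∈ N; exact ha ▸ haN
    | inv_of i h => exact N.inv_mem h
    | mul g₁ g₂ h₁ h₂ => exact N.mul_mem h₁ h₂
  rw [eq_top_iff]
  intro g _
  exact key g
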